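/- arXiv:2112.02527 — 2 statements merged into one kernel-verified Lean document; each statement's English description precedes it below -/
import Mathlib

section
/- The distance Laplacian spectrum of the complete bipartite graph K_{a,b} with a + b = n is { (2n−a) with multiplicity b−1, (2n−b) with multiplicity a−1, n with multiplicity 1, 0 with multiplicity 1 }, and its Wiener index satisfies 2W(K_{a,b}) = 2n² − 2n − 2ab. -/
open Finset Matrix BigOperators

variable {V : Type*} [Fintype V] [DecidableEq V]

/-- The transmission of a vertex: the sum of distances to all other vertices. -/
noncomputable def transmission (G : SimpleGraph V) (v : V) : ℕ := ∑ u, G.dist v u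

/-- The distance matrix of a graph. -/
noncomputable def distMatrix (G : SimpleGraph V) : Matrix V V ℝ :=
  fun u v => (G.dist u v : ℝ)

/-- The distance Laplacian matrix `Tr(G) - D(G)`. -/
noncomputable def distLap (G : SimpleGraph V) : Matrix V V ℝ :=
  Matrix.diagonal (fun v => (transmission G v : ℝ)) - distMatrix G

/-- The Wiener index of a graph. -/
noncomputable def wiener (G : SimpleGraph V) : ℝ := (∑ v, (transmission G v : ℝ)) / 2

/-- `ρ` lists the eigenvalues of the (Hermitian) matrix `M` in nonincreasing order. -/
def IsSpectrum {n : ℕ} (M : Matrix (Fin n) (Fin n) ℝ) (ρ : Fin n → ℝ) : Prop :=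
  Antitone ρ ∧ ∃ (hM : M.IsHermitian) (e : Fin n ≃ Fin n), ∀ i, ρ i = hM.eigenvalues (e i)

/-- Distance Laplacian energy, given the eigenvalue list `ρ`. -/
noncomputable def DLEnergy {n : ℕ} (G : SimpleGraph (Fin n)) (ρ : Fin n → ℝ) : ℝ :=
  ∑ i, |ρ i - 2 * wiener G / n|

/-- The graph has diameter two. -/
def diamTwo (G : SimpleGraph V) : Prop :=
  (∀ u v, G.dist u v ≤ 2) ∧ ∃ u v, G.dist u v = 2

/-- The multiset of eigenvalues of a Hermitian matrix. -/
noncomputable def eigMultiset (M : Matrix V V ℝ) (hM : M.IsHermitian) : Multiset ℝ :=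
  Finset.univ.val.map hM.eigenvalues

/-- Complete bipartite graph on `Fin n`, parts `{i : i < a}` and `{i : a ≤ i}`. -/
def completeBip (n a : ℕ) : SimpleGraph (Fin n) :=
  SimpleGraph.fromRel (fun u v => ((u : ℕ) < a) ≠ ((v : ℕ) < a))

/-! ### Auxiliary lemmas -/

open Polynomial

section Aux

set_option linter.unusedVariables false
set_option linter.unnecessarySeqFocus false
set_option linter.unreachableTactic false
set_option linter.unusedTactic false

lemma cB_adj {n a : ℕ} (u v : Fin n) :
    (completeBip n a).Adj u v ↔ u ≠ v ∧ ¬(((u:ℕ) < a) ↔ ((v:ℕ) < a)) := by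
  simp only [completeBip, SimpleGraph.fromRel_adj, ne_eq, eq_iff_iff]
  tauto

lemma cB_dist {n a : ℕ} (ha : 1 ≤ a) (hab : a < n) (u v : Fin n) :
    (completeBip n a).dist u v =
      if u = v then 0 else if (((u:ℕ) < a) ↔ ((v:ℕ) < a)) then 2 else 1 := by
  rcases eq_or_ne u v with h | h
  · simp [h]
  rw [if_neg h]
  by_cases hp : (((u:ℕ) < a) ↔ ((v:ℕ) < a))
  · rw [if_pos hp]
    set z : Fin n := if (u:ℕ) < a then ⟨a, hab⟩ else ⟨0, by omega⟩ with hz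
    have hza : ((z:ℕ) < a) ↔ ¬ ((u:ℕ) < a) := by
      by_cases h1 : (u:ℕ) < a <;> simp [hz, h1] <;> omega
    have h1 : (completeBip n a).Adj u z := by
      rw [cB_adj]
      constructor
      · intro he; rw [he] at hza; tauto
      · tauto
    have h2 : (completeBip n a).Adj z v := by
      rw [cB_adj]
      constructor
      · intro he; rw [← he] at hp; tauto
      · rw [hza]; tauto
    have hle : (completeBip n a).dist u v ≤ 2 :=
      (SimpleGraph.dist_le (SimpleGraph.Walk.cons h1 h2.toWalk))
    have hnadj : ¬ (completeBip n a).Adj u v := by rw [cB_adj]; tauto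
    have hne1 : (completeBip n a).dist u v ≠ 1 := fun hd =>
      hnadj (SimpleGraph.dist_eq_one_iff_adj.mp hd)
    have hne0 : (completeBip n a).dist u v ≠ 0 := by
      rw [SimpleGraph.dist_ne_zero_iff_ne_and_reachable]
      exact ⟨h, ⟨SimpleGraph.Walk.cons h1 h2.toWalk⟩⟩
    omega
  · rw [if_neg hp, SimpleGraph.dist_eq_one_iff_adj, cB_adj]
    exact ⟨h, hp⟩

lemma card_lt_filter (n a : ℕ) (h : a ≤ n) :
    (univ.filter (fun u : Fin n => (u:ℕ) < a)).card = a := by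
  rw [Finset.card_filter, Fin.sum_univ_eq_sum_range (fun i => if i < a then 1 else 0),
    ← Finset.card_filter]
  have : (range n).filter (· < a) = range a := by ext x; simp; omega
  rw [this, Finset.card_range]

lemma card_ge_filter (n a : ℕ) (h : a ≤ n) :
    (univ.filter (fun u : Fin n => ¬ (u:ℕ) < a)).card = n - a := by
  rw [Finset.filter_not, Finset.card_sdiff_of_subset (Finset.filter_subset _ _), card_lt_filter n a h,
    Finset.card_univ, Fintype.card_fin]

lemma cB_transmission {a b n : ℕ} (ha : 1 ≤ a) (hb : 1 ≤ b) (hn : n = a + b) (v : Fin n) :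
    transmission (completeBip n a) v = if (v:ℕ) < a then n + a - 2 else n + b - 2 := by
  have hab : a < n := by omega
  have key : ∀ u : Fin n, (if (((v:ℕ) < a) ↔ ((u:ℕ) < a)) then 2 else 1) =
      (completeBip n a).dist v u + (if v = u then 2 else 0) := by
    intro u
    rw [cB_dist ha hab]
    rcases eq_or_ne v u with h | h
    · simp [h]
    · simp [h]
  have hsum : (∑ u : Fin n, if (((v:ℕ) < a) ↔ ((u:ℕ) < a)) then 2 else 1)
      = transmission (completeBip n a) v + 2 := by
    rw [Finset.sum_congr rfl (fun u _ => key u), Finset.sum_add_distrib, transmission]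
    congr 1
    simp
  have hsum2 : (∑ u : Fin n, if (((v:ℕ) < a) ↔ ((u:ℕ) < a)) then 2 else 1)
      = if (v:ℕ) < a then 2 * a + (n - a) else a + 2 * (n - a) := by
    by_cases hv : (v:ℕ) < a
    · simp only [hv, true_iff, if_true]
      rw [Finset.sum_ite, Finset.sum_const, Finset.sum_const,
        card_lt_filter n a (le_of_lt hab), card_ge_filter n a (le_of_lt hab)]
      simp [mul_comm]
    · simp only [hv, false_iff, if_false]
      rw [Finset.sum_ite, Finset.sum_const, Finset.sum_const]
      simp only [not_not]
      rw [card_lt_filter n a (le_of_lt hab), card_ge_filter n a (le_of_lt hab)]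
      simp only [smul_eq_mul, mul_one]
      omega
  rw [hsum] at hsum2
  split_ifs at hsum2 ⊢ <;> omega

lemma cB_transR {a b n : ℕ} (ha : 1 ≤ a) (hb : 1 ≤ b) (hn : n = a + b) (v : Fin n) :
    (transmission (completeBip n a) v : ℝ) =
      if (v:ℕ) < a then (n:ℝ) + a - 2 else (n:ℝ) + b - 2 := by
  rw [cB_transmission ha hb hn]
  split_ifs
  · rw [Nat.cast_sub (by omega)]; push_cast; ring
  · rw [Nat.cast_sub (by omega)]; push_cast; ring

lemma cB_wiener {a b n : ℕ} (ha : 1 ≤ a) (hb : 1 ≤ b) (hn : n = a + b) :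
    2 * wiener (completeBip n a) = 2 * (n : ℝ) ^ 2 - 2 * n - 2 * a * b := by
  rw [wiener, mul_div_cancel₀ _ (two_ne_zero)]
  rw [Finset.sum_congr rfl (fun v _ => cB_transR ha hb hn v)]
  rw [Finset.sum_ite, Finset.sum_const, Finset.sum_const,
    card_lt_filter n a (by omega), card_ge_filter n a (by omega)]
  have h1 : ((n - a : ℕ) : ℝ) = (n : ℝ) - a := by rw [Nat.cast_sub (by omega)]
  simp only [nsmul_eq_mul, h1]
  have hnn : (n:ℝ) = (a:ℝ) + b := by rw [hn]; push_cast; ring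
  rw [hnn]; ring

lemma cB_distLap {a b n : ℕ} (ha : 1 ≤ a) (hb : 1 ≤ b) (hn : n = a + b) (i k : Fin n) :
    distLap (completeBip n a) i k =
      if i = k then (if (i:ℕ) < a then (n:ℝ) + a - 2 else (n:ℝ) + b - 2)
      else (if (((i:ℕ) < a) ↔ ((k:ℕ) < a)) then -2 else -1) := by
  rw [distLap, Matrix.sub_apply, distMatrix, cB_dist ha (by omega)]
  rcases eq_or_ne i k with h | h
  · subst h
    rw [Matrix.diagonal_apply_eq, cB_transR ha hb hn]
    simp
  · rw [Matrix.diagonal_apply_ne _ h, if_neg h, if_neg h]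
    split_ifs <;> push_cast <;> ring

noncomputable def Qm (a b n : ℕ) : Matrix (Fin n) (Fin n) ℝ := fun i j =>
  if (j:ℕ) = 0 then 1
  else if (j:ℕ) < a then (if i = j then 1 else 0) - (if (i:ℕ) = 0 then 1 else 0)
  else if (j:ℕ) = a then (if (i:ℕ) < a then (b:ℝ) else -(a:ℝ))
  else (if i = j then 1 else 0) - (if (i:ℕ) = a then 1 else 0)

noncomputable def Rm (a b n : ℕ) : Matrix (Fin n) (Fin n) ℝ := fun j k =>
  if (j:ℕ) = 0 then 1/n
  else if (j:ℕ) < a then (if k = j then 1 else 0) - (if (k:ℕ) < a then 1/(a:ℝ) else 0)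
  else if (j:ℕ) = a then (if (k:ℕ) < a then 1/((a:ℝ)*n) else -(1/((b:ℝ)*n)))
  else (if k = j then 1 else 0) - (if (k:ℕ) < a then 0 else 1/(b:ℝ))

noncomputable def dvec (a b n : ℕ) : Fin n → ℝ := fun j =>
  if (j:ℕ) = 0 then 0
  else if (j:ℕ) < a then 2*(n:ℝ) - b
  else if (j:ℕ) = a then (n:ℝ)
  else 2*(n:ℝ) - a

def SA (a : ℕ) (n : ℕ) : Finset (Fin n) := univ.filter (fun j => (j:ℕ) ≠ 0 ∧ (j:ℕ) < a)
def SB (a : ℕ) (n : ℕ) : Finset (Fin n) := univ.filter (fun j => a < (j:ℕ))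

lemma univ_split {n : ℕ} (a : ℕ) (ha : 1 ≤ a) (hab : a < n) :
    (univ : Finset (Fin n)) =
      insert ⟨0, by omega⟩ (insert ⟨a, hab⟩ (SA a n ∪ SB a n)) := by
  ext x
  simp [SA, SB, Fin.ext_iff]
  omega

lemma sum_split {n : ℕ} (a : ℕ) (ha : 1 ≤ a) (hab : a < n) (f : Fin n → ℝ) :
    ∑ j, f j = f ⟨0, by omega⟩ + f ⟨a, hab⟩ + ∑ j ∈ SA a n, f j + ∑ j ∈ SB a n, f j := by
  rw [univ_split a ha hab, Finset.sum_insert (by simp [SA, SB, Fin.ext_iff]; try omega),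
    Finset.sum_insert (by simp [SA, SB, Fin.ext_iff]; try omega),
    Finset.sum_union (by rw [SA, SB, Finset.disjoint_filter]; intro x _ hx; omega)]
  ring

lemma card_SA {n : ℕ} (a : ℕ) (hab : a ≤ n) : (SA a n).card = a - 1 := by
  rw [SA, Finset.card_filter,
    Fin.sum_univ_eq_sum_range (fun i => if i ≠ 0 ∧ i < a then 1 else 0), ← Finset.card_filter]
  have : (range n).filter (fun i => i ≠ 0 ∧ i < a) = Finset.Ico 1 a := by
    ext x; simp; omega
  rw [this, Nat.card_Ico]

lemma card_SB {n : ℕ} (a : ℕ) (hab : a ≤ n) : (SB a n).card = n - a - 1 := by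
  rw [SB, Finset.card_filter,
    Fin.sum_univ_eq_sum_range (fun i => if a < i then 1 else 0), ← Finset.card_filter]
  have : (range n).filter (fun i => a < i) = Finset.Ico (a+1) n := by
    ext x; simp; omega
  rw [this, Nat.card_Ico]
  omega

lemma sum_delta_prod {n : ℕ} (s : Finset (Fin n)) (i k : Fin n) (c1 c2 : ℝ) :
    ∑ j ∈ s, ((if i = j then (1:ℝ) else 0) - c1) * ((if k = j then (1:ℝ) else 0) - c2)
    = (if i = k then (if i ∈ s then (1:ℝ) else 0) else 0)
      - c2 * (if i ∈ s then (1:ℝ) else 0) - c1 * (if k ∈ s then (1:ℝ) else 0)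
      + s.card * (c1 * c2) := by
  have expand : ∀ j, ((if i = j then (1:ℝ) else 0) - c1) * ((if k = j then (1:ℝ) else 0) - c2)
      = (if i = j then (if k = j then (1:ℝ) else 0) else 0)
        - c2 * (if i = j then (1:ℝ) else 0) - c1 * (if k = j then (1:ℝ) else 0) + c1 * c2 := by
    intro j
    rcases eq_or_ne i j with h | h <;> rcases eq_or_ne k j with h' | h' <;>
      simp [h, h'] <;> ring
  rw [Finset.sum_congr rfl (fun j _ => expand j)]
  rw [Finset.sum_add_distrib, Finset.sum_sub_distrib, Finset.sum_sub_distrib,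
    ← Finset.mul_sum, ← Finset.mul_sum, Finset.sum_ite_eq, Finset.sum_ite_eq,
    Finset.sum_ite_eq, Finset.sum_const, nsmul_eq_mul]
  rcases eq_or_ne i k with h | h
  · subst h; simp
  · rw [if_neg h]
    have : (if i ∈ s then (if k = i then (1:ℝ) else 0) else 0) = 0 := by
      split_ifs with h1 h2
      · exact absurd h2.symm h
      · rfl
      · rfl
    rw [this]

set_option maxHeartbeats 1000000 in
lemma QR_eq_one {a b n : ℕ} (ha : 1 ≤ a) (hb : 1 ≤ b) (hn : n = a + b) :
    Qm a b n * Rm a b n = 1 := by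
  have hab : a < n := by omega
  have h0 : (0:ℕ) < n := by omega
  have ha' : (a:ℝ) ≠ 0 := Nat.cast_ne_zero.mpr (by omega)
  have hb' : (b:ℝ) ≠ 0 := Nat.cast_ne_zero.mpr (by omega)
  have hnr : (n:ℝ) = (a:ℝ) + b := by subst hn; push_cast; ring
  have hab' : (a:ℝ) + b ≠ 0 := by positivity
  ext i k
  rw [Matrix.mul_apply, sum_split a ha hab, Matrix.one_apply]
  have e0 : Qm a b n i ⟨0, h0⟩ * Rm a b n ⟨0, h0⟩ k = 1/n := by
    simp [Qm, Rm]
  have ea : Qm a b n i ⟨a, hab⟩ * Rm a b n ⟨a, hab⟩ k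
      = (if (i:ℕ) < a then (b:ℝ) else -(a:ℝ)) *
        (if (k:ℕ) < a then 1/((a:ℝ)*n) else -(1/((b:ℝ)*n))) := by
    have h1 : ¬ (a = 0) := by omega
    simp [Qm, Rm, h1]
  have eSA : ∑ j ∈ SA a n, Qm a b n i j * Rm a b n j k
      = ∑ j ∈ SA a n, ((if i = j then (1:ℝ) else 0) - (if (i:ℕ) = 0 then 1 else 0)) *
          ((if k = j then (1:ℝ) else 0) - (if (k:ℕ) < a then 1/(a:ℝ) else 0)) := by
    refine Finset.sum_congr rfl (fun j hj => ?_)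
    simp only [SA, Finset.mem_filter, Finset.mem_univ, true_and] at hj
    simp only [Qm, Rm, if_neg hj.1, if_pos hj.2]
  have eSB : ∑ j ∈ SB a n, Qm a b n i j * Rm a b n j k
      = ∑ j ∈ SB a n, ((if i = j then (1:ℝ) else 0) - (if (i:ℕ) = a then 1 else 0)) *
          ((if k = j then (1:ℝ) else 0) - (if (k:ℕ) < a then 0 else 1/(b:ℝ))) := by
    refine Finset.sum_congr rfl (fun j hj => ?_)
    simp only [SB, Finset.mem_filter, Finset.mem_univ, true_and] at hj
    simp only [Qm, Rm, if_neg (by omega : ¬ (j:ℕ) = 0), if_neg (by omega : ¬ (j:ℕ) < a),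
      if_neg (by omega : ¬ (j:ℕ) = a)]
  rw [e0, ea, eSA, eSB, sum_delta_prod, sum_delta_prod, card_SA a (by omega),
    card_SB a (by omega)]
  have hc1 : ((a - 1 : ℕ) : ℝ) = (a:ℝ) - 1 := by
    rw [Nat.cast_sub ha]; simp
  have hc2 : ((n - a - 1 : ℕ) : ℝ) = (b:ℝ) - 1 := by
    rw [show n - a - 1 = b - 1 by omega, Nat.cast_sub hb]; simp
  rw [hc1, hc2]
  simp only [SA, SB, Finset.mem_filter, Finset.mem_univ, true_and, Fin.ext_iff, Fin.val_mk]
  rw [hnr]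
  split_ifs <;> first | omega | (field_simp; try ring)

lemma sum_mul_delta {n : ℕ} (f : Fin n → ℝ) (j : Fin n) :
    ∑ k, f k * (if k = j then 1 else 0) = f j := by
  rw [Finset.sum_congr rfl (fun k _ => by rw [mul_ite, mul_one, mul_zero]),
    Finset.sum_ite_eq' univ j f]
  simp

lemma sum_mul_delta_val {n : ℕ} (f : Fin n → ℝ) (m : ℕ) (hm : m < n) :
    ∑ k, f k * (if (k:ℕ) = m then 1 else 0) = f ⟨m, hm⟩ := by
  rw [← sum_mul_delta f ⟨m, hm⟩]
  refine Finset.sum_congr rfl (fun k _ => ?_)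
  congr 1
  simp [Fin.ext_iff]

lemma rowsum_M {a b n : ℕ} (ha : 1 ≤ a) (hb : 1 ≤ b) (hn : n = a + b) (i : Fin n) :
    ∑ k, distLap (completeBip n a) i k = 0 := by
  rw [distLap]
  simp only [Matrix.sub_apply, Finset.sum_sub_distrib]
  rw [Finset.sum_eq_single i (fun k _ hk => Matrix.diagonal_apply_ne _ (Ne.symm hk))
      (by intro h; exact absurd (Finset.mem_univ i) h), Matrix.diagonal_apply_eq]
  have : ∑ k, distMatrix (completeBip n a) i k = (transmission (completeBip n a) i : ℝ) := by
    rw [transmission]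
    push_cast
    rfl
  rw [this, sub_self]

lemma sumA_M {a b n : ℕ} (ha : 1 ≤ a) (hb : 1 ≤ b) (hn : n = a + b) (i : Fin n) :
    ∑ k ∈ univ.filter (fun k : Fin n => (k:ℕ) < a), distLap (completeBip n a) i k
      = if (i:ℕ) < a then (b:ℝ) else -(a:ℝ) := by
  have hnr : (n:ℝ) = (a:ℝ) + b := by subst hn; push_cast; ring
  by_cases hi : (i:ℕ) < a
  · rw [if_pos hi]
    have key : ∀ k ∈ univ.filter (fun k : Fin n => (k:ℕ) < a),
        distLap (completeBip n a) i k = (if k = i then (n:ℝ) + a else 0) + (-2) := by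
      intro k hk
      simp only [Finset.mem_filter, Finset.mem_univ, true_and] at hk
      rw [cB_distLap ha hb hn]
      rcases eq_or_ne i k with h | h
      · subst h; rw [if_pos rfl, if_pos rfl, if_pos hi]; ring
      · rw [if_neg h, if_neg (Ne.symm h), if_pos (by tauto)]; ring
    rw [Finset.sum_congr rfl key, Finset.sum_add_distrib, Finset.sum_ite_eq',
      Finset.sum_const, card_lt_filter n a (by omega)]
    simp only [Finset.mem_filter, Finset.mem_univ, true_and, if_pos hi, nsmul_eq_mul]
    rw [hnr]; ring
  · rw [if_neg hi]
    have key : ∀ k ∈ univ.filter (fun k : Fin n => (k:ℕ) < a),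
        distLap (completeBip n a) i k = -1 := by
      intro k hk
      simp only [Finset.mem_filter, Finset.mem_univ, true_and] at hk
      rw [cB_distLap ha hb hn, if_neg (by intro h; subst h; exact hi hk),
        if_neg (by tauto)]
    rw [Finset.sum_congr rfl key, Finset.sum_const, card_lt_filter n a (by omega)]
    simp

lemma sumB_M {a b n : ℕ} (ha : 1 ≤ a) (hb : 1 ≤ b) (hn : n = a + b) (i : Fin n) :
    ∑ k ∈ univ.filter (fun k : Fin n => ¬ (k:ℕ) < a), distLap (completeBip n a) i k
      = if (i:ℕ) < a then -(b:ℝ) else (a:ℝ) := by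
  have h1 := rowsum_M ha hb hn i
  rw [← Finset.sum_filter_add_sum_filter_not univ (fun k : Fin n => (k:ℕ) < a),
    sumA_M ha hb hn i] at h1
  split_ifs at h1 ⊢ <;> linarith

set_option maxHeartbeats 1000000 in
lemma MQ_eq {a b n : ℕ} (ha : 1 ≤ a) (hb : 1 ≤ b) (hn : n = a + b) :
    distLap (completeBip n a) * Qm a b n = Qm a b n * Matrix.diagonal (dvec a b n) := by
  have hab : a < n := by omega
  have h0 : (0:ℕ) < n := by omega
  have hnr : (n:ℝ) = (a:ℝ) + b := by subst hn; push_cast; ring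
  ext i j
  rw [Matrix.mul_apply, Matrix.mul_diagonal]
  by_cases hj0 : (j:ℕ) = 0
  · rw [Finset.sum_congr rfl (fun k _ => by rw [show Qm a b n k j = 1 by simp [Qm, hj0]]),
      Finset.sum_congr rfl (fun k _ => mul_one _), rowsum_M ha hb hn i]
    simp [dvec, hj0]
  by_cases hja : (j:ℕ) < a
  · have hq : ∀ k, Qm a b n k j
        = (if k = j then 1 else 0) - (if (k:ℕ) = 0 then 1 else 0) := by
      intro k; simp only [Qm, if_neg hj0, if_pos hja]
    rw [Finset.sum_congr rfl (fun k _ => by rw [hq k, mul_sub]), Finset.sum_sub_distrib,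
      sum_mul_delta, sum_mul_delta_val _ 0 h0]
    rw [cB_distLap ha hb hn i j, cB_distLap ha hb hn i ⟨0, h0⟩]
    simp only [Qm, dvec, if_neg hj0, if_pos hja, Fin.ext_iff, Fin.val_mk]
    have h0a : (0:ℕ) < a := by omega
    split_ifs <;> first | omega | (rw [hnr]; ring) | ring
  by_cases hjaeq : (j:ℕ) = a
  · have hq : ∀ k, Qm a b n k j = (if (k:ℕ) < a then (b:ℝ) else -(a:ℝ)) := by
      intro k; simp only [Qm, if_neg hj0, if_neg hja, if_pos hjaeq]
    rw [Finset.sum_congr rfl (fun k _ => by rw [hq k, mul_ite]),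
      Finset.sum_ite, ← Finset.sum_mul, ← Finset.sum_mul,
      sumA_M ha hb hn i, sumB_M ha hb hn i]
    simp only [Qm, dvec, if_neg hj0, if_neg hja, if_pos hjaeq]
    split_ifs <;> (rw [hnr]; ring)
  · have hq : ∀ k, Qm a b n k j
        = (if k = j then 1 else 0) - (if (k:ℕ) = a then 1 else 0) := by
      intro k; simp only [Qm, if_neg hj0, if_neg hja, if_neg hjaeq]
    rw [Finset.sum_congr rfl (fun k _ => by rw [hq k, mul_sub]), Finset.sum_sub_distrib,
      sum_mul_delta, sum_mul_delta_val _ a hab]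
    rw [cB_distLap ha hb hn i j, cB_distLap ha hb hn i ⟨a, hab⟩]
    simp only [Qm, dvec, if_neg hj0, if_neg hja, if_neg hjaeq, Fin.ext_iff, Fin.val_mk]
    split_ifs <;> first | omega | (rw [hnr]; ring) | ring

lemma charpoly_conj {n : ℕ} (Q D R : Matrix (Fin n) (Fin n) ℝ) (h : Q * R = 1) :
    (Q * D * R).charpoly = D.charpoly := by
  have hmapC : ∀ (A B : Matrix (Fin n) (Fin n) ℝ), (A * B).map (C : ℝ →+* ℝ[X])
      = A.map C * B.map C := fun A B => Matrix.map_mul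
  have hQR : (Q.map (C : ℝ →+* ℝ[X])) * (R.map C) = 1 := by
    rw [← hmapC, h]; simp
  have key : charmatrix (Q * D * R)
      = (Q.map C) * charmatrix D * (R.map C) := by
    rw [charmatrix, charmatrix]
    rw [mul_sub, sub_mul]
    congr 1
    · have hs := (Matrix.scalar_commute (X : ℝ[X]) (fun r' => Commute.all _ _)
        (R.map (C : ℝ →+* ℝ[X]))).eq
      rw [mul_assoc, hs, ← mul_assoc, hQR, one_mul]
    · show (Q * D * R).map (C : ℝ →+* ℝ[X]) = Q.map C * ((C : ℝ →+* ℝ[X]).mapMatrix D) * R.map C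
      rw [hmapC, hmapC]
      rfl
  rw [Matrix.charpoly, Matrix.charpoly, key, det_mul, det_mul]
  have : (Q.map (C : ℝ →+* ℝ[X])).det * (R.map C).det = 1 := by
    rw [← det_mul, hQR, det_one]
  calc (Q.map C).det * (charmatrix D).det * (R.map C).det
      = (charmatrix D).det * ((Q.map C).det * (R.map C).det) := by ring
    _ = (charmatrix D).det := by rw [this, mul_one]

lemma charpoly_diag {n : ℕ} (d : Fin n → ℝ) :
    (Matrix.diagonal d).charpoly = ∏ i, (X - C (d i)) := by
  have : charmatrix (Matrix.diagonal d) = Matrix.diagonal (fun i => X - C (d i)) := by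
    ext i j
    rcases eq_or_ne i j with rfl | hij
    · simp
    · simp [hij]
  rw [Matrix.charpoly, this, det_diagonal]

lemma charpoly_hermitian {n : ℕ} (M : Matrix (Fin n) (Fin n) ℝ) (hM : M.IsHermitian) :
    M.charpoly = ∏ i, (X - C (hM.eigenvalues i)) := by
  have hU : (hM.eigenvectorUnitary : Matrix (Fin n) (Fin n) ℝ) *
      (star (hM.eigenvectorUnitary : Matrix (Fin n) (Fin n) ℝ)) = 1 :=
    (Matrix.mem_unitaryGroup_iff).mp hM.eigenvectorUnitary.2
  have hd : (RCLike.ofReal ∘ hM.eigenvalues : Fin n → ℝ) = hM.eigenvalues := by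
    funext i; simp [RCLike.ofReal_real_eq_id]
  conv_lhs => rw [hM.spectral_theorem, Unitary.conjStarAlgAut_apply, charpoly_conj _ _ _ hU, charpoly_diag, hd]

lemma roots_prod {n : ℕ} (f : Fin n → ℝ) :
    (∏ i, (X - C (f i))).roots = Multiset.map f Finset.univ.val := by
  have : ∏ i, (X - C (f i)) = ((Finset.univ.val.map f).map (fun r => X - C r)).prod := by
    rw [Multiset.map_map]
    rfl
  rw [this, Polynomial.roots_multiset_prod_X_sub_C]

lemma dvec_multiset {a b n : ℕ} (ha : 1 ≤ a) (hb : 1 ≤ b) (hn : n = a + b) :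
    Multiset.map (dvec a b n) (univ : Finset (Fin n)).val =
      Multiset.replicate (b - 1) (2 * (n : ℝ) - a) +
        Multiset.replicate (a - 1) (2 * (n : ℝ) - b) + {(n : ℝ), 0} := by
  have hab : a < n := by omega
  have h0 : (0:ℕ) < n := by omega
  have hdisj : Disjoint (SA a n) (SB a n) := by
    rw [SA, SB, Finset.disjoint_filter]; intro x _ hx; omega
  rw [univ_split a ha hab,
    Finset.insert_val_of_notMem (by simp [SA, SB, Fin.ext_iff]; try omega),
    Finset.insert_val_of_notMem (by simp [SA, SB, Fin.ext_iff]; try omega),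
    ← Finset.disjUnion_eq_union _ _ hdisj,
    (show ((SA a n).disjUnion (SB a n) hdisj).val = (SA a n).val + (SB a n).val from rfl),
    Multiset.map_cons, Multiset.map_cons, Multiset.map_add]
  have hz0 : dvec a b n ⟨0, h0⟩ = 0 := by simp [dvec]
  have hza : dvec a b n ⟨a, hab⟩ = (n:ℝ) := by
    simp only [dvec, Fin.val_mk]
    rw [if_neg (by omega), if_neg (by omega)]
    simp
  have hSA : Multiset.map (dvec a b n) (SA a n).val
      = Multiset.replicate (a - 1) (2 * (n : ℝ) - b) := by
    rw [Multiset.eq_replicate]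
    constructor
    · rw [Multiset.card_map]
      exact card_SA a (by omega)
    · intro x hx
      obtain ⟨j, hj, hjx⟩ := Multiset.mem_map.mp hx
      rw [← Finset.mem_def] at hj
      simp only [SA, Finset.mem_filter, Finset.mem_univ, true_and] at hj
      rw [← hjx]
      simp only [dvec]
      rw [if_neg hj.1, if_pos hj.2]
  have hSB : Multiset.map (dvec a b n) (SB a n).val
      = Multiset.replicate (b - 1) (2 * (n : ℝ) - a) := by
    rw [Multiset.eq_replicate]
    constructor
    · rw [Multiset.card_map]
      show (SB a n).card = b - 1
      rw [card_SB a (by omega)]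
      omega
    · intro x hx
      obtain ⟨j, hj, hjx⟩ := Multiset.mem_map.mp hx
      rw [← Finset.mem_def] at hj
      simp only [SB, Finset.mem_filter, Finset.mem_univ, true_and] at hj
      rw [← hjx]
      simp only [dvec]
      rw [if_neg (by omega : ¬ (j:ℕ) = 0), if_neg (by omega : ¬ (j:ℕ) < a),
        if_neg (by omega : ¬ (j:ℕ) = a)]
  rw [hz0, hza, hSA, hSB]
  have : ({(n : ℝ), 0} : Multiset ℝ) = (n:ℝ) ::ₘ (0:ℝ) ::ₘ 0 := rfl
  rw [this]
  rw [← Multiset.singleton_add, ← Multiset.singleton_add, ← Multiset.singleton_add,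
    ← Multiset.singleton_add]
  abel

end Aux

theorem stmt9 (a b : ℕ) (ha : 1 ≤ a) (hb : 1 ≤ b) (n : ℕ) (hn : n = a + b)
    (hM : (distLap (completeBip n a)).IsHermitian) :
    eigMultiset _ hM =
      Multiset.replicate (b - 1) (2 * (n : ℝ) - a) +
        Multiset.replicate (a - 1) (2 * (n : ℝ) - b) + {(n : ℝ), 0} ∧
      2 * wiener (completeBip n a) = 2 * (n : ℝ) ^ 2 - 2 * n - 2 * a * b := by
  constructor
  · have hQR := QR_eq_one ha hb hn
    have hfact : distLap (completeBip n a)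
        = Qm a b n * Matrix.diagonal (dvec a b n) * Rm a b n := by
      calc distLap (completeBip n a)
          = distLap (completeBip n a) * (Qm a b n * Rm a b n) := by rw [hQR, mul_one]
        _ = (distLap (completeBip n a) * Qm a b n) * Rm a b n := by rw [mul_assoc]
        _ = (Qm a b n * Matrix.diagonal (dvec a b n)) * Rm a b n := by rw [MQ_eq ha hb hn]
    have hcp : (distLap (completeBip n a)).charpoly = ∏ j, (X - C (dvec a b n j)) := by
      rw [hfact, charpoly_conj _ _ _ hQR, charpoly_diag]
    have hcp2 : (distLap (completeBip n a)).charpoly = ∏ i, (X - C (hM.eigenvalues i)) :=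
      charpoly_hermitian _ hM
    have hmul : Multiset.map hM.eigenvalues (univ : Finset (Fin n)).val
        = Multiset.map (dvec a b n) (univ : Finset (Fin n)).val := by
      rw [← roots_prod, ← roots_prod, ← hcp, ← hcp2]
    rw [eigMultiset, hmul, dvec_multiset ha hb hn]
  · exact cB_wiener ha hb hn
end

section
/- The distance Laplacian spectrum of the graph K_k ∇ (K_t ∪ K_{n−k−t}) is { 2n−k with multiplicity 1, (2n−t−k) with multiplicity t−1, (n+t) with multiplicity n−t−k−1, n with multiplicity k, 0 with multiplicity 1 }, and its Wiener index W satisfies 2W = n² − n + 2nt − 2t² − 2kt. -/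
open Finset Matrix BigOperators

variable {V : Type*} [Fintype V] [DecidableEq V]

/-- The graph `K_k ∇ (K_t ∪ K_{n-k-t})` on `Fin n`: the first `k` vertices form a clique
joined to everything, the next `t` vertices form a clique, the remaining form a clique. -/
def joinCliques (n k t : ℕ) : SimpleGraph (Fin n) :=
  SimpleGraph.fromRel (fun u v =>
    (u : ℕ) < k ∨ (v : ℕ) < k ∨ (((u : ℕ) < k + t) ↔ ((v : ℕ) < k + t)))

namespace S18
open Polynomial

lemma my_charpoly_conj {n : ℕ} (P Q D : Matrix (Fin n) (Fin n) ℝ) (hPQ : P * Q = 1) :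
    (P * D * Q).charpoly = D.charpoly := by
  have hPQ' : (P.map (C : ℝ → ℝ[X])) * (Q.map C) = 1 := by
    rw [← Matrix.map_mul, hPQ]; simp
  have hQP' : (Q.map (C : ℝ → ℝ[X])) * (P.map C) = 1 := mul_eq_one_comm.mp hPQ'
  have h1 : charmatrix (P * D * Q) =
      P.map (C : ℝ → ℝ[X]) * charmatrix D * Q.map C := by
    unfold charmatrix
    simp only [RingHom.mapMatrix_apply, Matrix.map_mul]
    rw [Matrix.mul_sub, Matrix.sub_mul]
    congr 1
    rw [mul_assoc, (Matrix.scalar_commute X (Commute.all X) (Q.map C)).eq, ← mul_assoc,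
      hPQ', one_mul]
  unfold Matrix.charpoly
  rw [h1, det_mul, det_mul, mul_comm ((P.map (C : ℝ → ℝ[X])).det), mul_assoc, ← det_mul,
    hPQ', det_one, mul_one]

lemma my_charpoly_diagonal {n : ℕ} (d : Fin n → ℝ) :
    (Matrix.diagonal d).charpoly = ∏ i, (X - C (d i)) := by
  unfold Matrix.charpoly
  have : charmatrix (Matrix.diagonal d) = Matrix.diagonal (fun i => X - C (d i)) := by
    ext i j
    by_cases h : i = j
    · subst h; simp [charmatrix_apply_eq]
    · simp [charmatrix_apply_ne _ _ _ h, Matrix.diagonal_apply_ne _ h]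
  rw [this, det_diagonal]

lemma my_charpoly_hermitian {n : ℕ} (M : Matrix (Fin n) (Fin n) ℝ) (hM : M.IsHermitian) :
    M.charpoly = ∏ i, (X - C (hM.eigenvalues i)) := by
  have hs := hM.spectral_theorem
  rw [RCLike.ofReal_real_eq_id] at hs
  simp only [Function.id_comp] at hs
  have hU : ((hM.eigenvectorUnitary : Matrix (Fin n) (Fin n) ℝ)) *
      star (hM.eigenvectorUnitary : Matrix (Fin n) (Fin n) ℝ) = 1 :=
    mem_unitaryGroup_iff.mp hM.eigenvectorUnitary.2
  calc M.charpoly = (((hM.eigenvectorUnitary : Matrix (Fin n) (Fin n) ℝ)) *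
        diagonal hM.eigenvalues * star (hM.eigenvectorUnitary : Matrix (Fin n) (Fin n) ℝ)).charpoly := by
        conv_lhs => rw [hs]
        rw [Unitary.conjStarAlgAut_apply]
    _ = _ := by rw [my_charpoly_conj _ _ _ hU, my_charpoly_diagonal]

-- multiset-of-eigenvalues lemma
lemma my_eig_multiset {n : ℕ} (M : Matrix (Fin n) (Fin n) ℝ) (hM : M.IsHermitian)
    (P Q : Matrix (Fin n) (Fin n) ℝ) (d : Fin n → ℝ) (hPQ : P * Q = 1)
    (hMP : M = P * diagonal d * Q) :
    (Finset.univ.val.map hM.eigenvalues : Multiset ℝ) = Finset.univ.val.map d := by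
  have h1 : M.charpoly = ∏ i, (X - C (d i)) := by
    rw [hMP, my_charpoly_conj _ _ _ hPQ, my_charpoly_diagonal]
  have h2 := my_charpoly_hermitian M hM
  have key : ((Finset.univ.val.map hM.eigenvalues).map (fun a => X - C a)).prod
      = ((Finset.univ.val.map d).map (fun a => X - C a)).prod := by
    rw [Multiset.map_map, Multiset.map_map]
    show (Finset.univ.prod fun i => X - C (hM.eigenvalues i))
      = Finset.univ.prod fun i => X - C (d i)
    rw [← h1, ← h2]
  have := congrArg Polynomial.roots key
  rwa [Polynomial.roots_multiset_prod_X_sub_C, Polynomial.roots_multiset_prod_X_sub_C] at this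


def aN (k m : ℕ) : ℝ := if m < k then 1 else 0
def bN (k t m : ℕ) : ℝ := if m < k then 0 else if m < k + t then 1 else 0
def cN (k t m : ℕ) : ℝ := if m < k + t then 0 else 1
def dl (i j : ℕ) : ℝ := if i = j then 1 else 0

def ancN (k t j : ℕ) : ℕ := if j < k then 0 else if j < k + t then k else k + t
def pdN (k t j : ℕ) : ℝ := if j = 0 ∨ j = k ∨ j = k + t then 0 else 1
def paN (k t s j : ℕ) : ℝ := if j = 0 then 1 else if j = k then (t : ℝ) + s else 0
def pbN (k t s j : ℕ) : ℝ :=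
  if j = 0 then 1 else if j = k then -(k : ℝ) else if j = k + t then (s : ℝ) else 0
def pcN (k t s j : ℕ) : ℝ :=
  if j = 0 then 1 else if j = k then -(k : ℝ) else if j = k + t then -(t : ℝ) else 0

def Pe (k t s v j : ℕ) : ℝ :=
  pdN k t j * (dl v j - dl v (ancN k t j)) + paN k t s j * aN k v +
    pbN k t s j * bN k t v + pcN k t s j * cN k t v

noncomputable def qaN (k t s j : ℕ) : ℝ :=
  if j = 0 then 1 / ((k : ℝ) + t + s) else if j < k then -1 / k
  else if j = k then 1 / (k * ((k : ℝ) + t + s)) else 0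
noncomputable def qbN (k t s j : ℕ) : ℝ :=
  if j = 0 then 1 / ((k : ℝ) + t + s) else if j < k then 0
  else if j = k then -1 / (((t : ℝ) + s) * ((k : ℝ) + t + s))
  else if j < k + t then -1 / t
  else if j = k + t then 1 / (t * ((t : ℝ) + s)) else 0
noncomputable def qcN (k t s j : ℕ) : ℝ :=
  if j = 0 then 1 / ((k : ℝ) + t + s) else if j < k then 0
  else if j = k then -1 / (((t : ℝ) + s) * ((k : ℝ) + t + s))
  else if j < k + t then 0
  else if j = k + t then -1 / (s * ((t : ℝ) + s)) else -1 / s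

noncomputable def Qe (k t s j v : ℕ) : ℝ :=
  pdN k t j * dl v j + qaN k t s j * aN k v + qbN k t s j * bN k t v + qcN k t s j * cN k t v

def ddN (k t s j : ℕ) : ℝ :=
  if j = 0 then 0 else if j ≤ k then (k : ℝ) + t + s
  else if j < k + t then (k : ℝ) + t + 2 * s
  else if j = k + t then (k : ℝ) + 2 * t + 2 * s else (k : ℝ) + 2 * t + s


variable {n k t s : ℕ}


lemma sum_blocks (hn : n = k + t + s) (F : ℕ → ℝ) (x y z : ℝ)
    (hA : ∀ i, i < k → F i = x) (hB : ∀ i, k ≤ i → i < k + t → F i = y)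
    (hC : ∀ i, k + t ≤ i → i < k + t + s → F i = z) :
    ∑ v : Fin n, F (v : ℕ) = k * x + t * y + s * z := by
  rw [Fin.sum_univ_eq_sum_range F n]
  subst hn
  rw [Finset.range_eq_Ico,
    ← Finset.sum_Ico_consecutive F (Nat.zero_le (k + t)) (by omega : k + t ≤ k + t + s),
    ← Finset.sum_Ico_consecutive F (Nat.zero_le k) (by omega : k ≤ k + t)]
  have h1 : ∑ i ∈ Finset.Ico 0 k, F i = k * x := by
    rw [Finset.sum_congr rfl (fun i hi => hA i (by simp at hi; omega))]
    simp [mul_comm]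
  have h2 : ∑ i ∈ Finset.Ico k (k + t), F i = t * y := by
    rw [Finset.sum_congr rfl (fun i hi => by
      simp only [Finset.mem_Ico] at hi; exact hB i hi.1 hi.2)]
    simp [Nat.add_sub_cancel_left, mul_comm]
  have h3 : ∑ i ∈ Finset.Ico (k + t) (k + t + s), F i = s * z := by
    rw [Finset.sum_congr rfl (fun i hi => by
      simp only [Finset.mem_Ico] at hi; exact hC i hi.1 hi.2)]
    simp [Nat.add_sub_cancel_left, mul_comm]
  rw [h1, h2, h3]

lemma sum_delta (m : ℕ) (hm : m < n) (g : ℕ → ℝ) :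
    ∑ v : Fin n, (if (v : ℕ) = m then g (v : ℕ) else 0) = g m := by
  rw [Fin.sum_univ_eq_sum_range (fun i => if i = m then g i else 0) n]
  rw [Finset.sum_ite_eq' (Finset.range n) m g]
  simp [hm]

lemma sum_dl (m : ℕ) (hm : m < n) : ∑ v : Fin n, dl (v : ℕ) m = 1 := by
  have := sum_delta (n := n) m hm (fun _ => (1:ℝ))
  simpa [dl] using this

lemma sum_dl_mul (m : ℕ) (hm : m < n) (g : ℕ → ℝ) :
    ∑ v : Fin n, dl (v : ℕ) m * g (v : ℕ) = g m := by
  have := sum_delta (n := n) m hm g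
  rw [← this]
  apply Finset.sum_congr rfl
  intro v _
  by_cases h : (v : ℕ) = m <;> simp [dl, h]

lemma sum_aN (hn : n = k + t + s) : ∑ v : Fin n, aN k (v : ℕ) = k := by
  have := sum_blocks hn (aN k) 1 0 0
    (fun i hi => by simp only [aN]; rw [if_pos hi])
    (fun i h1 h2 => by simp only [aN]; rw [if_neg (by omega)])
    (fun i h1 h2 => by simp only [aN]; rw [if_neg (by omega)])
  simpa using this

lemma sum_bN (hn : n = k + t + s) : ∑ v : Fin n, bN k t (v : ℕ) = t := by
  have := sum_blocks hn (bN k t) 0 1 0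
    (fun i hi => by simp only [bN]; rw [if_pos hi])
    (fun i h1 h2 => by simp only [bN]; rw [if_neg (by omega), if_pos (by omega)])
    (fun i h1 h2 => by simp only [bN]; rw [if_neg (by omega), if_neg (by omega)])
  simpa using this

lemma sum_cN (hn : n = k + t + s) : ∑ v : Fin n, cN k t (v : ℕ) = s := by
  have := sum_blocks hn (cN k t) 0 0 1
    (fun i hi => by simp only [cN]; rw [if_pos (by omega)])
    (fun i h1 h2 => by simp only [cN]; rw [if_pos (by omega)])
    (fun i h1 h2 => by simp only [cN]; rw [if_neg (by omega)])
  simpa using this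


-- product sums of indicators
lemma sum_aa (hn : n = k + t + s) : ∑ v : Fin n, aN k (v:ℕ) * aN k (v:ℕ) = k := by
  have := sum_blocks hn (fun i => aN k i * aN k i) 1 0 0
    (fun i hi => by simp only [aN]; rw [if_pos hi]; norm_num)
    (fun i h1 h2 => by simp only [aN]; rw [if_neg (by omega)]; norm_num)
    (fun i h1 h2 => by simp only [aN]; rw [if_neg (by omega)]; norm_num)
  simpa using this

lemma sum_ab (hn : n = k + t + s) : ∑ v : Fin n, aN k (v:ℕ) * bN k t (v:ℕ) = 0 := by
  have := sum_blocks hn (fun i => aN k i * bN k t i) 0 0 0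
    (fun i hi => by simp [aN, bN, hi])
    (fun i h1 h2 => by simp only [aN]; rw [if_neg (by omega)]; norm_num)
    (fun i h1 h2 => by simp only [aN]; rw [if_neg (by omega)]; norm_num)
  simpa using this

lemma sum_ac (hn : n = k + t + s) : ∑ v : Fin n, aN k (v:ℕ) * cN k t (v:ℕ) = 0 := by
  have := sum_blocks hn (fun i => aN k i * cN k t i) 0 0 0
    (fun i hi => by simp only [cN]; rw [if_pos (by omega)]; norm_num)
    (fun i h1 h2 => by simp only [aN]; rw [if_neg (by omega)]; norm_num)
    (fun i h1 h2 => by simp only [aN]; rw [if_neg (by omega)]; norm_num)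
  simpa using this

lemma sum_bb (hn : n = k + t + s) : ∑ v : Fin n, bN k t (v:ℕ) * bN k t (v:ℕ) = t := by
  have := sum_blocks hn (fun i => bN k t i * bN k t i) 0 1 0
    (fun i hi => by simp only [bN]; rw [if_pos hi]; norm_num)
    (fun i h1 h2 => by simp only [bN]; rw [if_neg (by omega), if_pos (by omega)]; norm_num)
    (fun i h1 h2 => by simp only [bN]; rw [if_neg (by omega), if_neg (by omega)]; norm_num)
  simpa using this

lemma sum_bc (hn : n = k + t + s) : ∑ v : Fin n, bN k t (v:ℕ) * cN k t (v:ℕ) = 0 := by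
  have := sum_blocks hn (fun i => bN k t i * cN k t i) 0 0 0
    (fun i hi => by simp only [bN]; rw [if_pos hi]; norm_num)
    (fun i h1 h2 => by simp only [cN]; rw [if_pos (by omega)]; norm_num)
    (fun i h1 h2 => by simp only [bN]; rw [if_neg (by omega), if_neg (by omega)]; norm_num)
  simpa using this

lemma sum_cc (hn : n = k + t + s) : ∑ v : Fin n, cN k t (v:ℕ) * cN k t (v:ℕ) = s := by
  have := sum_blocks hn (fun i => cN k t i * cN k t i) 0 0 1
    (fun i hi => by simp only [cN]; rw [if_pos (by omega)]; norm_num)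
    (fun i h1 h2 => by simp only [cN]; rw [if_pos (by omega)]; norm_num)
    (fun i h1 h2 => by simp only [cN]; rw [if_neg (by omega)]; norm_num)
  simpa using this

lemma anc_lt (hn : n = k + t + s) (hk : 1 ≤ k) (ht : 1 ≤ t) (hs : 1 ≤ s) (j : ℕ) :
    ancN k t j < n := by
  simp only [ancN]; split_ifs <;> omega

-- generic column sum
lemma sum_P_aux (j : Fin n) (hanc : ancN k t (j:ℕ) < n) (g : ℕ → ℝ) (Sa Sb Sc : ℝ)
    (ha : ∑ v : Fin n, g (v:ℕ) * aN k (v:ℕ) = Sa)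
    (hb : ∑ v : Fin n, g (v:ℕ) * bN k t (v:ℕ) = Sb)
    (hc : ∑ v : Fin n, g (v:ℕ) * cN k t (v:ℕ) = Sc) :
    ∑ v : Fin n, g (v:ℕ) * Pe k t s (v:ℕ) (j:ℕ)
      = pdN k t (j:ℕ) * (g (j:ℕ) - g (ancN k t (j:ℕ)))
        + paN k t s (j:ℕ) * Sa + pbN k t s (j:ℕ) * Sb + pcN k t s (j:ℕ) * Sc := by
  have step : ∀ v : Fin n, g (v:ℕ) * Pe k t s (v:ℕ) (j:ℕ)
      = pdN k t (j:ℕ) * (dl (v:ℕ) (j:ℕ) * g (v:ℕ))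
        - pdN k t (j:ℕ) * (dl (v:ℕ) (ancN k t (j:ℕ)) * g (v:ℕ))
        + paN k t s (j:ℕ) * (g (v:ℕ) * aN k (v:ℕ))
        + pbN k t s (j:ℕ) * (g (v:ℕ) * bN k t (v:ℕ))
        + pcN k t s (j:ℕ) * (g (v:ℕ) * cN k t (v:ℕ)) := fun v => by
    simp only [Pe]; ring
  rw [Finset.sum_congr rfl (fun v _ => step v)]
  rw [Finset.sum_add_distrib, Finset.sum_add_distrib, Finset.sum_add_distrib,
    Finset.sum_sub_distrib, ← Finset.mul_sum, ← Finset.mul_sum, ← Finset.mul_sum,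
    ← Finset.mul_sum, ← Finset.mul_sum]
  rw [sum_dl_mul (j:ℕ) j.isLt g, sum_dl_mul _ hanc g, ha, hb, hc]
  ring

lemma aN_anc (hk : 1 ≤ k) (j : ℕ) : aN k (ancN k t j) = aN k j := by
  simp only [aN, ancN]; split_ifs <;> first | rfl | omega

lemma bN_anc (hk : 1 ≤ k) (ht : 1 ≤ t) (j : ℕ) : bN k t (ancN k t j) = bN k t j := by
  simp only [bN, ancN]; split_ifs <;> first | rfl | omega

lemma cN_anc (hk : 1 ≤ k) (ht : 1 ≤ t) (j : ℕ) : cN k t (ancN k t j) = cN k t j := by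
  simp only [cN, ancN]; split_ifs <;> first | rfl | omega

lemma sum_P (hn : n = k + t + s) (hk : 1 ≤ k) (ht : 1 ≤ t) (hs : 1 ≤ s) (j : Fin n) :
    ∑ v : Fin n, Pe k t s (v:ℕ) (j:ℕ)
      = paN k t s (j:ℕ) * k + pbN k t s (j:ℕ) * t + pcN k t s (j:ℕ) * s := by
  have := sum_P_aux (s := s) j (anc_lt hn hk ht hs _) (fun _ => 1) k t s
    (by simpa using sum_aN hn) (by simpa using sum_bN hn) (by simpa using sum_cN hn)
  simpa using this

lemma sum_aP (hn : n = k + t + s) (hk : 1 ≤ k) (ht : 1 ≤ t) (hs : 1 ≤ s) (j : Fin n) :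
    ∑ v : Fin n, aN k (v:ℕ) * Pe k t s (v:ℕ) (j:ℕ) = paN k t s (j:ℕ) * k := by
  have := sum_P_aux (s := s) j (anc_lt hn hk ht hs _) (aN k) k 0 0
    (sum_aa hn) (sum_ab hn) (sum_ac hn)
  rw [this, aN_anc hk]
  ring

lemma sum_bP (hn : n = k + t + s) (hk : 1 ≤ k) (ht : 1 ≤ t) (hs : 1 ≤ s) (j : Fin n) :
    ∑ v : Fin n, bN k t (v:ℕ) * Pe k t s (v:ℕ) (j:ℕ) = pbN k t s (j:ℕ) * t := by
  have habe : ∑ v : Fin n, bN k t (v:ℕ) * aN k (v:ℕ) = 0 := by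
    rw [← sum_ab hn]; exact Finset.sum_congr rfl (fun v _ => mul_comm _ _)
  have := sum_P_aux (s := s) j (anc_lt hn hk ht hs _) (bN k t) 0 t 0
    habe (sum_bb hn) (sum_bc hn)
  rw [this, bN_anc hk ht]
  ring

lemma sum_cP (hn : n = k + t + s) (hk : 1 ≤ k) (ht : 1 ≤ t) (hs : 1 ≤ s) (j : Fin n) :
    ∑ v : Fin n, cN k t (v:ℕ) * Pe k t s (v:ℕ) (j:ℕ) = pcN k t s (j:ℕ) * s := by
  have hca : ∑ v : Fin n, cN k t (v:ℕ) * aN k (v:ℕ) = 0 := by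
    rw [← sum_ac hn]; exact Finset.sum_congr rfl (fun v _ => mul_comm _ _)
  have hcb : ∑ v : Fin n, cN k t (v:ℕ) * bN k t (v:ℕ) = 0 := by
    rw [← sum_bc hn]; exact Finset.sum_congr rfl (fun v _ => mul_comm _ _)
  have := sum_P_aux (s := s) j (anc_lt hn hk ht hs _) (cN k t) 0 0 s
    hca hcb (sum_cc hn)
  rw [this, cN_anc hk ht]
  ring



lemma adj_iff (u v : Fin n) : (joinCliques n k t).Adj u v ↔
    u ≠ v ∧ ((u:ℕ) < k ∨ (v:ℕ) < k ∨ (((u:ℕ) < k + t) ↔ ((v:ℕ) < k + t))) := by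
  simp only [joinCliques, SimpleGraph.fromRel_adj]
  constructor
  · rintro ⟨h1, h2 | h2⟩ <;> exact ⟨h1, by tauto⟩
  · rintro ⟨h1, h2⟩; exact ⟨h1, Or.inl h2⟩

lemma dist_cases (hn : n = k + t + s) (hk : 1 ≤ k) (u v : Fin n) :
    (joinCliques n k t).dist u v =
      if u = v then 0
      else if ((u:ℕ) < k ∨ (v:ℕ) < k ∨ (((u:ℕ) < k + t) ↔ ((v:ℕ) < k + t))) then 1
      else 2 := by
  split_ifs with h1 h2
  · subst h1; exact SimpleGraph.dist_self
  · exact SimpleGraph.dist_eq_one_iff_adj.mpr ((adj_iff u v).mpr ⟨h1, h2⟩)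
  · have hu : k ≤ (u:ℕ) := by omega
    have hv : k ≤ (v:ℕ) := by omega
    have hz : (0 : ℕ) < n := by omega
    set z : Fin n := ⟨0, hz⟩ with hzdef
    have hadj1 : (joinCliques n k t).Adj u z := by
      rw [adj_iff]
      refine ⟨?_, Or.inr (Or.inl (by simp [hzdef]; omega))⟩
      intro h; rw [h] at hu; simp [hzdef] at hu; omega
    have hadj2 : (joinCliques n k t).Adj z v := by
      rw [adj_iff]
      refine ⟨?_, Or.inl (by simp [hzdef]; omega)⟩
      intro h; rw [← h] at hv; simp [hzdef] at hv; omega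
    have hle : (joinCliques n k t).dist u v ≤ 2 := by
      have := SimpleGraph.dist_le (SimpleGraph.Walk.cons hadj1
        (SimpleGraph.Walk.cons hadj2 SimpleGraph.Walk.nil))
      simpa using this
    have hpos : 0 < (joinCliques n k t).dist u v := by
      refine SimpleGraph.Reachable.pos_dist_of_ne ?_ h1
      exact ⟨SimpleGraph.Walk.cons hadj1 (SimpleGraph.Walk.cons hadj2 SimpleGraph.Walk.nil)⟩
    have hne1 : (joinCliques n k t).dist u v ≠ 1 := by
      intro h
      have h3 := ((adj_iff u v).mp (SimpleGraph.dist_eq_one_iff_adj.mp h)).2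
      omega
    omega

lemma dist_real (hn : n = k + t + s) (hk : 1 ≤ k) (u v : Fin n) :
    (((joinCliques n k t).dist u v : ℕ) : ℝ) =
      1 + bN k t (u:ℕ) * cN k t (v:ℕ) + cN k t (u:ℕ) * bN k t (v:ℕ) - dl (u:ℕ) (v:ℕ) := by
  have hval : (u = v) ↔ ((u:ℕ) = (v:ℕ)) := ⟨fun h => by rw [h], fun h => Fin.ext h⟩
  rw [dist_cases hn hk u v]
  simp only [hval, bN, cN, dl]
  split_ifs <;> norm_num <;> omega


def trF (k t s m : ℕ) : ℝ := (k:ℝ) + t + s - 1 + s * bN k t m + t * cN k t m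

lemma dl_comm (i j : ℕ) : dl i j = dl j i := by simp [dl, eq_comm]

lemma trans_real (hn : n = k + t + s) (hk : 1 ≤ k) (u : Fin n) :
    ((transmission (joinCliques n k t) u : ℕ) : ℝ) = trF k t s (u:ℕ) := by
  unfold transmission
  push_cast
  rw [Finset.sum_congr rfl (fun v _ => dist_real hn hk u v)]
  have key : ∀ v : Fin n,
      1 + bN k t (u:ℕ) * cN k t (v:ℕ) + cN k t (u:ℕ) * bN k t (v:ℕ) - dl (u:ℕ) (v:ℕ)
      = (fun m => 1 + bN k t (u:ℕ) * cN k t m + cN k t (u:ℕ) * bN k t m) (v:ℕ)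
        - dl (v:ℕ) (u:ℕ) := fun v => by rw [dl_comm]
  rw [Finset.sum_congr rfl (fun v _ => key v), Finset.sum_sub_distrib]
  rw [sum_blocks hn (fun m => 1 + bN k t (u:ℕ) * cN k t m + cN k t (u:ℕ) * bN k t m)
    1 (1 + cN k t (u:ℕ)) (1 + bN k t (u:ℕ))
    (fun i hi => by simp only [bN, cN]; split_ifs <;> first | ring1 | (exfalso; omega))
    (fun i h1 h2 => by simp only [bN, cN]; split_ifs <;> first | ring1 | (exfalso; omega))
    (fun i h1 h2 => by simp only [bN, cN]; split_ifs <;> first | ring1 | (exfalso; omega))]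
  rw [sum_dl (u:ℕ) u.isLt]
  simp only [trF]
  push_cast
  ring

lemma M_entry (hn : n = k + t + s) (hk : 1 ≤ k) (u v : Fin n) :
    distLap (joinCliques n k t) u v =
      (trF k t s (u:ℕ) + 1) * dl (u:ℕ) (v:ℕ) - 1
        - bN k t (u:ℕ) * cN k t (v:ℕ) - cN k t (u:ℕ) * bN k t (v:ℕ) := by
  simp only [distLap, distMatrix, Matrix.sub_apply, Matrix.diagonal_apply]
  by_cases h : u = v
  · subst h
    rw [if_pos rfl, trans_real hn hk u, dist_real hn hk u u]
    simp [dl]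
    ring
  · rw [if_neg h, dist_real hn hk u v]
    have : dl (u:ℕ) (v:ℕ) = 0 := by
      simp only [dl, if_neg (fun hh => h (Fin.ext hh))]
    rw [this]
    ring

lemma sum_trF (hn : n = k + t + s) :
    ∑ u : Fin n, trF k t s (u:ℕ) =
      ((k:ℝ) + t + s) * ((k:ℝ) + t + s - 1) + 2 * s * t := by
  rw [sum_blocks hn (trF k t s) ((k:ℝ) + t + s - 1) ((k:ℝ) + t + s - 1 + s) ((k:ℝ) + t + s - 1 + t)
    (fun i hi => by simp only [trF, bN, cN]; split_ifs <;> first | ring1 | (exfalso; omega))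
    (fun i h1 h2 => by simp only [trF, bN, cN]; split_ifs <;> first | ring1 | (exfalso; omega))
    (fun i h1 h2 => by simp only [trF, bN, cN]; split_ifs <;> first | ring1 | (exfalso; omega))]
  ring


set_option maxHeartbeats 1000000 in
lemma key_identity {k t s : ℕ} (hk : 1 ≤ k) (ht : 1 ≤ t) (hs : 1 ≤ s) (u j : ℕ)
    (hu : u < k + t + s) (hj : j < k + t + s) :
    (trF k t s u + 1) * Pe k t s u j
      - (paN k t s j * k + pbN k t s j * t + pcN k t s j * s)
      - bN k t u * (pcN k t s j * s) - cN k t u * (pbN k t s j * t)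
      = Pe k t s u j * ddN k t s j := by
  have hj6 : j = 0 ∨ (0 < j ∧ j < k) ∨ j = k ∨ (k < j ∧ j < k + t) ∨ j = k + t ∨
      (k + t < j) := by omega
  have hu6 : u = 0 ∨ (0 < u ∧ u < k) ∨ u = k ∨ (k < u ∧ u < k + t) ∨ u = k + t ∨
      (k + t < u) := by omega
  rcases hj6 with h1|⟨h1,h1'⟩|h1|⟨h1,h1'⟩|h1|h1 <;>
    rcases hu6 with h2|⟨h2,h2'⟩|h2|⟨h2,h2'⟩|h2|h2 <;>
    simp only [trF, Pe, pdN, paN, pbN, pcN, ddN, ancN, aN, bN, cN, dl] <;>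
    simp (disch := omega) only [if_neg, if_pos] <;>
    (try split_ifs) <;> first | ring1 | (exfalso; omega)

set_option maxHeartbeats 3000000 in
lemma key2 {k t s : ℕ} (hk : 1 ≤ k) (ht : 1 ≤ t) (hs : 1 ≤ s) (j j' : ℕ)
    (hj : j < k + t + s) (hj' : j' < k + t + s) :
    pdN k t j * Pe k t s j j' + qaN k t s j * (paN k t s j' * k)
      + qbN k t s j * (pbN k t s j' * t) + qcN k t s j * (pcN k t s j' * s)
      = if j = j' then 1 else 0 := by
  have hk0 : (k:ℝ) ≠ 0 := by
    have : (0:ℝ) < k := by exact_mod_cast hk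
    exact ne_of_gt this
  have ht0 : (t:ℝ) ≠ 0 := by
    have : (0:ℝ) < t := by exact_mod_cast ht
    exact ne_of_gt this
  have hs0 : (s:ℝ) ≠ 0 := by
    have : (0:ℝ) < s := by exact_mod_cast hs
    exact ne_of_gt this
  have hts0 : (t:ℝ) + s ≠ 0 := by
    have h1 : (0:ℝ) < t := by exact_mod_cast ht
    have h2 : (0:ℝ) < s := by exact_mod_cast hs
    nlinarith
  have hn0 : (k:ℝ) + t + s ≠ 0 := by
    have h1 : (0:ℝ) < k := by exact_mod_cast hk
    have h2 : (0:ℝ) < t := by exact_mod_cast ht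
    have h3 : (0:ℝ) < s := by exact_mod_cast hs
    nlinarith
  have hj6 : j = 0 ∨ (0 < j ∧ j < k) ∨ j = k ∨ (k < j ∧ j < k + t) ∨ j = k + t ∨
      (k + t < j) := by omega
  have hj'6 : j' = 0 ∨ (0 < j' ∧ j' < k) ∨ j' = k ∨ (k < j' ∧ j' < k + t) ∨ j' = k + t ∨
      (k + t < j') := by omega
  rcases hj6 with h1|⟨h1,h1'⟩|h1|⟨h1,h1'⟩|h1|h1 <;>
    rcases hj'6 with h2|⟨h2,h2'⟩|h2|⟨h2,h2'⟩|h2|h2 <;>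
    simp only [Pe, pdN, paN, pbN, pcN, qaN, qbN, qcN, ancN, aN, bN, cN, dl] <;>
    simp (disch := omega) only [if_neg, if_pos] <;>
    (try split_ifs) <;> first | ring1 | (exfalso; omega) | (field_simp; try ring1)


noncomputable def Pm (n k t s : ℕ) : Matrix (Fin n) (Fin n) ℝ :=
  Matrix.of (fun v j => Pe k t s (v:ℕ) (j:ℕ))
noncomputable def Qm (n k t s : ℕ) : Matrix (Fin n) (Fin n) ℝ :=
  Matrix.of (fun j v => Qe k t s (j:ℕ) (v:ℕ))
noncomputable def ddV (n k t s : ℕ) : Fin n → ℝ := fun j => ddN k t s (j:ℕ)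

lemma MP_entry (hn : n = k + t + s) (hk : 1 ≤ k) (ht : 1 ≤ t) (hs : 1 ≤ s) (u j : Fin n) :
    (distLap (joinCliques n k t) * Pm n k t s) u j
      = (trF k t s (u:ℕ) + 1) * Pe k t s (u:ℕ) (j:ℕ)
        - (paN k t s (j:ℕ) * k + pbN k t s (j:ℕ) * t + pcN k t s (j:ℕ) * s)
        - bN k t (u:ℕ) * (pcN k t s (j:ℕ) * s) - cN k t (u:ℕ) * (pbN k t s (j:ℕ) * t) := by
  rw [Matrix.mul_apply]
  have e : ∀ v : Fin n, distLap (joinCliques n k t) u v * Pm n k t s v j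
      = (trF k t s (u:ℕ) + 1) * (dl (v:ℕ) (u:ℕ) * Pe k t s (v:ℕ) (j:ℕ))
        - Pe k t s (v:ℕ) (j:ℕ)
        - bN k t (u:ℕ) * (cN k t (v:ℕ) * Pe k t s (v:ℕ) (j:ℕ))
        - cN k t (u:ℕ) * (bN k t (v:ℕ) * Pe k t s (v:ℕ) (j:ℕ)) := fun v => by
    rw [M_entry hn hk u v, dl_comm]
    simp only [Pm, Matrix.of_apply]
    ring
  rw [Finset.sum_congr rfl (fun v _ => e v)]
  rw [Finset.sum_sub_distrib, Finset.sum_sub_distrib, Finset.sum_sub_distrib,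
    ← Finset.mul_sum, ← Finset.mul_sum, ← Finset.mul_sum]
  rw [sum_dl_mul (u:ℕ) u.isLt (fun m => Pe k t s m (j:ℕ)), sum_P hn hk ht hs j,
    sum_cP hn hk ht hs j, sum_bP hn hk ht hs j]

lemma MP_matrix (hn : n = k + t + s) (hk : 1 ≤ k) (ht : 1 ≤ t) (hs : 1 ≤ s) :
    distLap (joinCliques n k t) * Pm n k t s
      = Pm n k t s * Matrix.diagonal (ddV n k t s) := by
  ext u j
  rw [MP_entry hn hk ht hs u j, Matrix.mul_diagonal]
  have hu : (u:ℕ) < k + t + s := by have := u.isLt; omega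
  have hj : (j:ℕ) < k + t + s := by have := j.isLt; omega
  have := key_identity hk ht hs (u:ℕ) (j:ℕ) hu hj
  simpa only [Pm, Matrix.of_apply, ddV] using this

lemma QP_entry (hn : n = k + t + s) (hk : 1 ≤ k) (ht : 1 ≤ t) (hs : 1 ≤ s) (j j' : Fin n) :
    (Qm n k t s * Pm n k t s) j j'
      = pdN k t (j:ℕ) * Pe k t s (j:ℕ) (j':ℕ) + qaN k t s (j:ℕ) * (paN k t s (j':ℕ) * k)
        + qbN k t s (j:ℕ) * (pbN k t s (j':ℕ) * t)
        + qcN k t s (j:ℕ) * (pcN k t s (j':ℕ) * s) := by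
  rw [Matrix.mul_apply]
  have e : ∀ v : Fin n, Qm n k t s j v * Pm n k t s v j'
      = pdN k t (j:ℕ) * (dl (v:ℕ) (j:ℕ) * Pe k t s (v:ℕ) (j':ℕ))
        + qaN k t s (j:ℕ) * (aN k (v:ℕ) * Pe k t s (v:ℕ) (j':ℕ))
        + qbN k t s (j:ℕ) * (bN k t (v:ℕ) * Pe k t s (v:ℕ) (j':ℕ))
        + qcN k t s (j:ℕ) * (cN k t (v:ℕ) * Pe k t s (v:ℕ) (j':ℕ)) := fun v => by
    simp only [Qm, Pm, Matrix.of_apply, Qe]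
    ring
  rw [Finset.sum_congr rfl (fun v _ => e v)]
  rw [Finset.sum_add_distrib, Finset.sum_add_distrib, Finset.sum_add_distrib,
    ← Finset.mul_sum, ← Finset.mul_sum, ← Finset.mul_sum, ← Finset.mul_sum]
  rw [sum_dl_mul (j:ℕ) j.isLt (fun m => Pe k t s m (j':ℕ)), sum_aP hn hk ht hs j',
    sum_bP hn hk ht hs j', sum_cP hn hk ht hs j']

lemma QP_matrix (hn : n = k + t + s) (hk : 1 ≤ k) (ht : 1 ≤ t) (hs : 1 ≤ s) :
    Qm n k t s * Pm n k t s = 1 := by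
  ext j j'
  rw [QP_entry hn hk ht hs j j', Matrix.one_apply]
  have hj : (j:ℕ) < k + t + s := by have := j.isLt; omega
  have hj' : (j':ℕ) < k + t + s := by have := j'.isLt; omega
  have heq : (if j = j' then (1:ℝ) else 0) = (if (j:ℕ) = (j':ℕ) then (1:ℝ) else 0) := by
    simp [Fin.ext_iff]
  rw [heq]
  exact key2 hk ht hs (j:ℕ) (j':ℕ) hj hj'

lemma dd_multiset (hn : n = k + t + s) (hk : 1 ≤ k) (ht : 1 ≤ t) (hs : 1 ≤ s) :
    (Finset.univ.val.map (ddV n k t s) : Multiset ℝ)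
      = {(k:ℝ) + 2*t + 2*s} + Multiset.replicate (t - 1) ((k:ℝ) + t + 2*s)
        + Multiset.replicate (s - 1) ((k:ℝ) + 2*t + s)
        + Multiset.replicate k ((k:ℝ) + t + s) + {(0:ℝ)} := by
  obtain ⟨t', rfl⟩ : ∃ t', t = t' + 1 := ⟨t - 1, by omega⟩
  obtain ⟨s', rfl⟩ : ∃ s', s = s' + 1 := ⟨s - 1, by omega⟩
  have h1 : (Finset.univ.val : Multiset (Fin n)).map (ddV n k (t'+1) (s'+1))
      = (Multiset.range n).map (ddN k (t'+1) (s'+1)) := by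
    have h0 : ddV n k (t'+1) (s'+1) = (ddN k (t'+1) (s'+1)) ∘ Fin.val := rfl
    rw [h0, ← Multiset.map_map]
    congr 1
    have h2 := congrArg Finset.val (Fin.map_valEmbedding_univ (n := n))
    rw [Finset.map_val] at h2
    simp only [Nat.Iio_eq_range, Finset.range_val] at h2
    exact h2
  rw [h1, hn, show k + (t'+1) + (s'+1) = 1 + (k + (t' + (1 + s'))) from by omega]
  rw [Multiset.range_add, Multiset.range_add, Multiset.range_add, Multiset.range_add]
  simp only [Multiset.map_add, Multiset.map_map, Multiset.range_succ, Multiset.range_zero,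
    Multiset.map_cons, Multiset.map_zero]
  have p0 : ddN k (t'+1) (s'+1) 0 = 0 := by simp [ddN]
  have pA : (Multiset.range k).map (ddN k (t'+1) (s'+1) ∘ (1 + ·))
      = Multiset.replicate k ((k:ℝ) + (t'+1) + (s'+1)) := by
    apply Multiset.eq_replicate.mpr
    refine ⟨by simp, fun b hb => ?_⟩
    obtain ⟨i, hi, rfl⟩ := Multiset.mem_map.mp hb
    have hilt : i < k := Multiset.mem_range.mp hi
    simp only [Function.comp_apply, ddN]
    simp (disch := omega) only [if_neg, if_pos]
    push_cast; ring
  have pB : (Multiset.range t').map (ddN k (t'+1) (s'+1) ∘ (1 + ·) ∘ (k + ·))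
      = Multiset.replicate t' ((k:ℝ) + (t'+1) + 2*(s'+1)) := by
    apply Multiset.eq_replicate.mpr
    refine ⟨by simp, fun b hb => ?_⟩
    obtain ⟨i, hi, rfl⟩ := Multiset.mem_map.mp hb
    have hilt : i < t' := Multiset.mem_range.mp hi
    simp only [Function.comp_apply, ddN]
    simp (disch := omega) only [if_neg, if_pos]
    push_cast; ring
  have pC : ddN k (t'+1) (s'+1) (1 + (k + (t' + 0))) = (k:ℝ) + 2*(t'+1) + 2*(s'+1) := by
    simp only [ddN]
    simp (disch := omega) only [if_neg, if_pos]
    push_cast; ring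
  have pD : (Multiset.range s').map (ddN k (t'+1) (s'+1) ∘ (1 + ·) ∘ (k + ·) ∘ (t' + ·) ∘ (1 + ·))
      = Multiset.replicate s' ((k:ℝ) + 2*(t'+1) + (s'+1)) := by
    apply Multiset.eq_replicate.mpr
    refine ⟨by simp, fun b hb => ?_⟩
    obtain ⟨i, hi, rfl⟩ := Multiset.mem_map.mp hb
    have hilt : i < s' := Multiset.mem_range.mp hi
    simp only [Function.comp_apply, ddN]
    simp (disch := omega) only [if_neg, if_pos]
    push_cast; ring
  rw [p0, pA, pB, pC, pD]
  simp only [Nat.add_sub_cancel]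
  push_cast
  simp only [← Multiset.singleton_add, add_zero]
  abel

end S18

theorem stmt18 (n k t : ℕ) (hk : 1 ≤ k) (ht1 : 1 ≤ t) (ht2 : t ≤ (n - k) / 2)
    (hM : (distLap (joinCliques n k t)).IsHermitian) :
    eigMultiset _ hM =
      {2 * (n : ℝ) - k} + Multiset.replicate (t - 1) (2 * (n : ℝ) - t - k) +
        Multiset.replicate (n - t - k - 1) ((n : ℝ) + t) +
        Multiset.replicate k (n : ℝ) + {(0 : ℝ)} ∧
      2 * wiener (joinCliques n k t) =
        (n : ℝ) ^ 2 - n + 2 * n * t - 2 * (t : ℝ) ^ 2 - 2 * k * t := by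
  have h2t : t * 2 ≤ n - k := (Nat.le_div_iff_mul_le (by norm_num)).mp ht2
  set s := n - k - t with hsdef
  have hn : n = k + t + s := by omega
  have hs : 1 ≤ s := by omega
  have hnR : (n:ℝ) = (k:ℝ) + t + s := by rw [hn]; push_cast; ring
  constructor
  · have hQP := S18.QP_matrix hn hk ht1 hs
    have hPQ : S18.Pm n k t s * S18.Qm n k t s = 1 := mul_eq_one_comm.mp hQP
    have hMP : distLap (joinCliques n k t)
        = S18.Pm n k t s * Matrix.diagonal (S18.ddV n k t s) * S18.Qm n k t s := by
      calc distLap (joinCliques n k t)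
          = distLap (joinCliques n k t) * (S18.Pm n k t s * S18.Qm n k t s) := by
            rw [hPQ, mul_one]
        _ = (distLap (joinCliques n k t) * S18.Pm n k t s) * S18.Qm n k t s := by
            rw [mul_assoc]
        _ = _ := by rw [S18.MP_matrix hn hk ht1 hs]
    have hmult := S18.my_eig_multiset _ hM _ _ _ hPQ hMP
    show Finset.univ.val.map hM.eigenvalues = _
    rw [hmult, S18.dd_multiset hn hk ht1 hs]
    rw [show 2 * (n:ℝ) - k = (k:ℝ) + 2*t + 2*s from by rw [hnR]; ring,
        show 2 * (n:ℝ) - t - k = (k:ℝ) + t + 2*s from by rw [hnR]; ring,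
        show (n:ℝ) + t = (k:ℝ) + 2*t + s from by rw [hnR]; ring,
        show n - t - k - 1 = s - 1 from by omega,
        hnR]
  · unfold wiener
    have hsum : ∑ v : Fin n, ((transmission (joinCliques n k t) v : ℕ):ℝ)
        = ((k:ℝ)+t+s) * ((k:ℝ)+t+s - 1) + 2*s*t := by
      rw [Finset.sum_congr rfl (fun v _ => S18.trans_real hn hk v), S18.sum_trF hn]
    rw [hsum, hnR]
    ring
end
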